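/- Let F be twice differentiable on [0,U) with density f, survival S, hazard h = f/S, and suppose w(v) = v - 1/h(v) is strictly increasing. Then for every γ ≥ 1, the function z_γ(v) = v - γ·S(γv)/f(v) is strictly increasing in v (on the region where γv < U). -/

import Mathlib

open Set Filter

lemma deriv_nonneg_of_strictMonoOn_Ico {W : ℝ → ℝ} {U v d : ℝ}
    (hv : v ∈ Ioo 0 U) (hd : HasDerivAt W d v)
    (hm : StrictMonoOn W (Ico 0 U)) : 0 ≤ d := by
  have h1 : Tendsto (slope W v) (nhdsWithin v (Ioi v)) (nhds d) :=
    (hasDerivAt_iff_tendsto_slope.1 hd).mono_left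
      (nhdsWithin_mono _ (fun t ht => ne_of_gt ht))
  refine ge_of_tendsto h1 ?_
  filter_upwards [Ioo_mem_nhdsGT_of_mem ⟨le_refl v, hv.2⟩] with t ht
  rw [slope_def_field]
  have h2 : W v < W t :=
    hm ⟨hv.1.le, hv.2⟩ ⟨(hv.1.trans ht.1).le, ht.2⟩ ht.1
  have h3 : 0 < t - v := sub_pos.2 ht.1
  exact div_nonneg (by linarith) h3.le

theorem z_gamma_strict_mono
    (U : ℝ) (hU : 0 < U)
    (f f' S h : ℝ → ℝ)
    (hSderiv : ∀ v ∈ Ico 0 U, HasDerivAt S (-(f v)) v)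
    (hfderiv : ∀ v ∈ Ico 0 U, HasDerivAt f (f' v) v)
    (hfpos : ∀ v ∈ Ico 0 U, 0 < f v)
    (hSpos : ∀ v ∈ Ico 0 U, 0 < S v)
    (hh : ∀ v, h v = f v / S v)
    (hw : StrictMonoOn (fun v => v - 1 / h v) (Ico 0 U))
    (γ : ℝ) (hγ : 1 ≤ γ) :
    StrictMonoOn (fun v => v - γ * S (γ * v) / f v) {v | 0 ≤ v ∧ γ * v < U} := by
  have hγ0 : (0:ℝ) < γ := lt_of_lt_of_le one_pos hγ
  -- the regular virtual value function
  set W : ℝ → ℝ := fun v => v - S v / f v with hWdef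
  have hw' : StrictMonoOn W (Ico 0 U) := by
    intro a ha b hb hab
    have := hw ha hb hab
    simpa only [hh, one_div_div] using this
  -- derivative of W
  have hWd : ∀ v ∈ Ico 0 U, HasDerivAt W (2 + S v * f' v / (f v)^2) v := by
    intro v hv
    have hfv : f v ≠ 0 := (hfpos v hv).ne'
    have h1 := (hasDerivAt_id v).sub ((hSderiv v hv).div (hfderiv v hv) hfv)
    refine h1.congr_deriv ?_
    field_simp
    ring
  -- regularity: 0 ≤ 2 f² + S f' on the interior
  have hreg : ∀ v ∈ Ioo 0 U, 0 ≤ 2 * (f v)^2 + S v * f' v := by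
    intro v hv
    have hvm : v ∈ Ico 0 U := ⟨hv.1.le, hv.2⟩
    have ha : 0 < f v := hfpos v hvm
    have h0 : 0 ≤ 2 + S v * f' v / (f v)^2 :=
      deriv_nonneg_of_strictMonoOn_Ico hv (hWd v hvm) hw'
    have ha2 : (0:ℝ) < (f v)^2 := by positivity
    have heq : 2 + S v * f' v / (f v)^2 = (2 * (f v)^2 + S v * f' v) / (f v)^2 := by
      field_simp
    rw [heq, le_div_iff₀ ha2] at h0
    linarith
  -- λ = f/S² is monotone on Ico 0 U
  have hlamd : ∀ v ∈ Ioo 0 U,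
      HasDerivAt (fun t => f t / (S t)^2)
        ((2 * (f v)^2 + S v * f' v) / (S v)^3) v := by
    intro v hv
    have hvm : v ∈ Ico 0 U := ⟨hv.1.le, hv.2⟩
    have hSv : S v ≠ 0 := (hSpos v hvm).ne'
    have h1 := (hfderiv v hvm).div ((hSderiv v hvm).pow 2) (pow_ne_zero 2 hSv)
    refine h1.congr_deriv ?_
    simp only [Pi.pow_apply]
    field_simp
    ring
  have hlam : MonotoneOn (fun t => f t / (S t)^2) (Ico 0 U) := by
    apply monotoneOn_of_hasDerivWithinAt_nonneg (convex_Ico 0 U)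
      (f' := fun v => (2 * (f v)^2 + S v * f' v) / (S v)^3)
    · intro t ht
      exact ((hfderiv t ht).continuousAt.continuousWithinAt).div
        (((hSderiv t ht).continuousAt.pow 2).continuousWithinAt)
        (pow_ne_zero 2 (hSpos t ht).ne')
    · intro v hv
      rw [interior_Ico] at hv
      exact (hlamd v hv).hasDerivWithinAt
    · intro v hv
      rw [interior_Ico] at hv
      have hS : 0 < S v := hSpos v ⟨hv.1.le, hv.2⟩
      exact div_nonneg (hreg v hv) (by positivity)
  -- S is antitone on Ico 0 U
  have hSant : AntitoneOn S (Ico 0 U) := by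
    apply antitoneOn_of_hasDerivWithinAt_nonpos (convex_Ico 0 U)
      (f' := fun v => -(f v))
    · intro t ht
      exact (hSderiv t ht).continuousAt.continuousWithinAt
    · intro v hv
      rw [interior_Ico] at hv
      exact (hSderiv v ⟨hv.1.le, hv.2⟩).hasDerivWithinAt
    · intro v hv
      rw [interior_Ico] at hv
      exact neg_nonpos.2 (hfpos v ⟨hv.1.le, hv.2⟩).le
  -- main argument
  intro x hx y hy hxy
  obtain ⟨hx0, hxU⟩ := hx
  obtain ⟨hy0, hyU⟩ := hy
  -- memberships for points of [x, y]
  have hmem : ∀ v ∈ Icc x y, v ∈ Ico 0 U ∧ γ * v ∈ Ico 0 U ∧ v ≤ γ * v := by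
    intro v hv
    have hv0 : 0 ≤ v := hx0.trans hv.1
    have hvγ : v ≤ γ * v := le_mul_of_one_le_left hv0 hγ
    have hγvy : γ * v ≤ γ * y := by
      exact mul_le_mul_of_nonneg_left hv.2 hγ0.le
    have hγvU : γ * v < U := lt_of_le_of_lt hγvy hyU
    exact ⟨⟨hv0, lt_of_le_of_lt hvγ hγvU⟩, ⟨by positivity, hγvU⟩, hvγ⟩
  have hxm : x ∈ Ico 0 U := (hmem x ⟨le_refl x, hxy.le⟩).1
  have hym : y ∈ Ico 0 U := (hmem y ⟨hxy.le, le_refl y⟩).1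
  have hγym : γ * y ∈ Ico 0 U := (hmem y ⟨hxy.le, le_refl y⟩).2.1
  set c : ℝ := S (γ * y) / S x with hcdef
  have hq0 : 0 < S (γ * y) := hSpos _ hγym
  have hb0 : 0 < S x := hSpos _ hxm
  have hc : 0 < c := div_pos hq0 hb0
  -- derivative of g = z - γ c W on [x,y]
  set G' : ℝ → ℝ := fun v =>
    (1 + (γ^2 * f (γ*v) * f v + γ * S (γ*v) * f' v) / (f v)^2)
      - γ * c * (2 + S v * f' v / (f v)^2) with hG'def
  have hgd : ∀ v ∈ Icc x y,
      HasDerivAt (fun v => (v - γ * S (γ * v) / f v) - γ * c * W v) (G' v) v := by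
    intro v hv
    obtain ⟨hvm, hγvm, _⟩ := hmem v hv
    have hfv : f v ≠ 0 := (hfpos v hvm).ne'
    have hinner : HasDerivAt (fun t => γ * t) (γ * 1) v :=
      (hasDerivAt_id v).const_mul γ
    have hSγ : HasDerivAt (fun t => S (γ * t)) (-(f (γ * v)) * (γ * 1)) v :=
      (hSderiv (γ * v) hγvm).comp v hinner
    have hz : HasDerivAt (fun t => t - γ * S (γ * t) / f t)
        (1 - ((γ * (-(f (γ * v)) * (γ * 1))) * f v - γ * S (γ * v) * f' v) / (f v)^2) v :=
      (hasDerivAt_id v).sub ((hSγ.const_mul γ).div (hfderiv v hvm) hfv)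
    have hg := hz.sub ((hWd v hvm).const_mul (γ * c))
    refine hg.congr_deriv ?_
    rw [hG'def]
    field_simp
    ring
  -- G' is nonnegative on the interior
  have hG'nn : ∀ v ∈ Ioo x y, 0 ≤ G' v := by
    intro v hv
    have hvI : v ∈ Icc x y := ⟨hv.1.le, hv.2.le⟩
    obtain ⟨hvm, hγvm, hvγ⟩ := hmem v hvI
    have hvIoo : v ∈ Ioo 0 U := ⟨lt_of_le_of_lt hx0 hv.1, hvm.2⟩
    have ha : 0 < f v := hfpos v hvm
    have hb : 0 < S v := hSpos v hvm
    have hp : 0 < f (γ * v) := hfpos _ hγvm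
    have hq : 0 < S (γ * v) := hSpos _ hγvm
    have H1 : 0 ≤ 2 * (f v)^2 + S v * f' v := hreg v hvIoo
    have H2 : f v / (S v)^2 ≤ f (γ * v) / (S (γ * v))^2 := hlam hvm hγvm hvγ
    have H2' : f v * (S (γ * v))^2 ≤ f (γ * v) * (S v)^2 := by
      rw [div_le_div_iff₀ (by positivity) (by positivity)] at H2
      linarith
    have H3 : S (γ * y) ≤ S (γ * v) := by
      apply hSant hγvm hγym
      exact mul_le_mul_of_nonneg_left hv.2.le hγ0.le
    have H4 : S v ≤ S x := hSant hxm hvm hv.1.le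
    -- step 1: 0 ≤ 2 + S v f' v / f v ²
    have h2nn : 0 ≤ 2 + S v * f' v / (f v)^2 := by
      have heq : 2 + S v * f' v / (f v)^2 = (2 * (f v)^2 + S v * f' v) / (f v)^2 := by
        field_simp
      rw [heq]
      positivity
    -- step 2: c ≤ S(γ v)/S v, so the subtracted term is at most with q/b
    have hcle : γ * c * (2 + S v * f' v / (f v)^2)
        ≤ γ * (S (γ * v) / S v) * (2 + S v * f' v / (f v)^2) := by
      apply mul_le_mul_of_nonneg_right _ h2nn
      apply mul_le_mul_of_nonneg_left _ hγ0.le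
      rw [hcdef, div_le_div_iff₀ hb0 hb]
      nlinarith
    -- step 3: the remaining expression simplifies, the f' terms cancel
    have hcalc : (1 + (γ^2 * f (γ*v) * f v + γ * S (γ*v) * f' v) / (f v)^2)
        - γ * (S (γ * v) / S v) * (2 + S v * f' v / (f v)^2)
        = 1 + γ^2 * f (γ*v) / f v - 2 * γ * S (γ*v) / S v := by
      field_simp
      ring
    have hfin : 0 ≤ 1 + γ^2 * f (γ*v) / f v - 2 * γ * S (γ*v) / S v := by
      have hkey : 0 ≤ f v * S v + γ^2 * f (γ*v) * S v - 2 * γ * S (γ*v) * f v := by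
        nlinarith [mul_nonneg ha.le (sq_nonneg (S v - γ * S (γ * v))),
          mul_le_mul_of_nonneg_left H2' (sq_nonneg γ)]
      have heq : 1 + γ^2 * f (γ*v) / f v - 2 * γ * S (γ*v) / S v
          = (f v * S v + γ^2 * f (γ*v) * S v - 2 * γ * S (γ*v) * f v) / (f v * S v) := by
        field_simp
      rw [heq]
      positivity
    rw [hG'def]
    simp only
    linarith [hcalc ▸ (by linarith [hfin] :
      (0:ℝ) ≤ (1 + (γ^2 * f (γ*v) * f v + γ * S (γ*v) * f' v) / (f v)^2)
        - γ * (S (γ * v) / S v) * (2 + S v * f' v / (f v)^2))]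
  -- g is monotone on [x, y]
  have hgmono : MonotoneOn (fun v => (v - γ * S (γ * v) / f v) - γ * c * W v) (Icc x y) := by
    apply monotoneOn_of_hasDerivWithinAt_nonneg (convex_Icc x y) (f' := G')
    · intro v hv
      exact (hgd v hv).continuousAt.continuousWithinAt
    · intro v hv
      rw [interior_Icc] at hv
      exact (hgd v ⟨hv.1.le, hv.2.le⟩).hasDerivWithinAt
    · intro v hv
      rw [interior_Icc] at hv
      exact hG'nn v hv
  have hgle := hgmono ⟨le_refl x, hxy.le⟩ ⟨hxy.le, le_refl y⟩ hxy.le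
  have hWlt : W x < W y := hw' hxm hym hxy
  have hpos : γ * c * W x < γ * c * W y :=
    mul_lt_mul_of_pos_left hWlt (mul_pos hγ0 hc)
  have hgle' : x - γ * S (γ * x) / f x - γ * c * W x
      ≤ y - γ * S (γ * y) / f y - γ * c * W y := hgle
  show x - γ * S (γ * x) / f x < y - γ * S (γ * y) / f y
  have hWx : W x = x - S x / f x := rfl
  have hWy : W y = y - S y / f y := rfl
  rw [hWx, hWy] at hgle' hpos
  linarith
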